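/- (Wirtinger's inequality, case k = 1.) For all vectors x, y ∈ ℝ^{2n}, the symplectic area |ω(x,y)| = |xᵀ J_{2n} y| is bounded by the Euclidean area of the parallelogram spanned by x and y: (xᵀ J_{2n} y)² ≤ ‖x‖²‖y‖² − ⟨x,y⟩². -/

import Mathlib

open Matrix

/-- The standard symplectic matrix `J` on `ℝ^{2m}`, with coordinates ordered in
symplectic pairs `(p₁,q₁,…,p_m,q_m)`: block-diagonal with `m` copies of
`[[0,-1],[1,0]]` down the diagonal. -/
def symplJ (m : ℕ) : Matrix (Fin (2 * m)) (Fin (2 * m)) ℝ :=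
  Matrix.of fun i j =>
    if i.val + 1 = j.val ∧ i.val % 2 = 0 then (-1 : ℝ)
    else if j.val + 1 = i.val ∧ j.val % 2 = 0 then 1 else 0

/-- The symplectic partner index: `2k ↦ 2k+1`, `2k+1 ↦ 2k`. -/
def symplPartner {m : ℕ} (i : Fin (2 * m)) : Fin (2 * m) :=
  ⟨if i.val % 2 = 0 then i.val + 1 else i.val - 1, by
    rcases i with ⟨i, hi⟩; dsimp only; split_ifs <;> omega⟩

lemma symplPartner_inj {m : ℕ} {i j : Fin (2 * m)}
    (h : symplPartner i = symplPartner j) : i = j := by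
  rcases i with ⟨i, hi⟩; rcases j with ⟨j, hj⟩
  simp only [symplPartner, Fin.mk.injEq] at h ⊢
  split_ifs at h <;> omega

lemma symplJ_apply {m : ℕ} (i k : Fin (2 * m)) :
    symplJ m k i = if k = symplPartner i then (if i.val % 2 = 0 then (1:ℝ) else -1) else 0 := by
  rcases i with ⟨i, hi⟩; rcases k with ⟨k, hk⟩
  simp only [symplJ, symplPartner, Matrix.of_apply, Fin.mk.injEq]
  split_ifs <;> first | rfl | omega

lemma symplJ_transpose (m : ℕ) : (symplJ m)ᵀ = -symplJ m := by
  ext i j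
  simp only [Matrix.transpose_apply, Matrix.neg_apply, symplJ, Matrix.of_apply]
  split_ifs <;> first | omega | norm_num

lemma symplJ_mul_self (m : ℕ) : (symplJ m)ᵀ * symplJ m = 1 := by
  ext i j
  rw [Matrix.mul_apply]
  have hs : ∀ k : Fin (2 * m), k ≠ symplPartner i → (symplJ m)ᵀ i k * symplJ m k j = 0 := by
    intro k hk
    simp [Matrix.transpose_apply, symplJ_apply i k, hk]
  rw [Finset.sum_eq_single (symplPartner i) (fun k _ hk => hs k hk) (by simp)]
  rw [Matrix.transpose_apply, symplJ_apply i (symplPartner i), symplJ_apply j (symplPartner i)]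
  rcases eq_or_ne i j with rfl | hij
  · simp only [if_pos rfl, Matrix.one_apply_eq]
    split_ifs <;> norm_num
  · have : symplPartner i ≠ symplPartner j := fun h => hij (symplPartner_inj h)
    simp [this, Matrix.one_apply_ne hij]

/-- **Wirtinger's inequality, case `k = 1`.**  For all `x, y ∈ ℝ^{2n}`, the
symplectic area `|ω(x,y)| = |xᵀ J_{2n} y|` is bounded by the Euclidean area
of the parallelogram spanned by `x` and `y`:
`(xᵀ J y)² ≤ ‖x‖²‖y‖² − ⟨x,y⟩²`. -/
theorem wirtinger_two_vectors (n : ℕ) (x y : Fin (2 * n) → ℝ) :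
    (x ⬝ᵥ (symplJ n).mulVec y) ^ 2 ≤ (x ⬝ᵥ x) * (y ⬝ᵥ y) - (x ⬝ᵥ y) ^ 2 := by
  set J := symplJ n with hJ
  set a : ℝ := x ⬝ᵥ y with ha
  set b : ℝ := (J.mulVec x) ⬝ᵥ y with hb
  -- x ⬝ᵥ J y = -b
  have hxy : x ⬝ᵥ J.mulVec y = -b := by
    rw [hb, Matrix.dotProduct_mulVec, ← Matrix.mulVec_transpose, symplJ_transpose,
      Matrix.neg_mulVec]
    simp [dotProduct_comm, hJ]
  -- ⟨Jx, Jx⟩ = ⟨x, x⟩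
  have hJJ : (J.mulVec x) ⬝ᵥ (J.mulVec x) = x ⬝ᵥ x := by
    rw [Matrix.dotProduct_mulVec, ← Matrix.mulVec_transpose, Matrix.mulVec_mulVec,
      symplJ_mul_self, Matrix.one_mulVec]
  -- ⟨x, Jx⟩ = 0
  have hxJx : x ⬝ᵥ (J.mulVec x) = 0 := by
    have h1 : x ⬝ᵥ J.mulVec x = -((J.mulVec x) ⬝ᵥ x) := by
      rw [Matrix.dotProduct_mulVec, ← Matrix.mulVec_transpose, symplJ_transpose,
        Matrix.neg_mulVec]
      simp [hJ]
    have h2 : (J.mulVec x) ⬝ᵥ x = x ⬝ᵥ J.mulVec x := dotProduct_comm _ _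
    linarith [h1, h2 ▸ h1]
  -- the auxiliary vector u = a • x + b • Jx
  set u : Fin (2 * n) → ℝ := a • x + b • (J.mulVec x) with hu
  have huy : u ⬝ᵥ y = a ^ 2 + b ^ 2 := by
    simp [hu, add_dotProduct, smul_dotProduct, smul_eq_mul, ← ha, ← hb, sq]
  have huu : u ⬝ᵥ u = (a ^ 2 + b ^ 2) * (x ⬝ᵥ x) := by
    simp only [hu, add_dotProduct, dotProduct_add, smul_dotProduct,
      dotProduct_smul, smul_eq_mul, hJJ, hxJx]
    have : (J.mulVec x) ⬝ᵥ x = 0 := by rw [dotProduct_comm]; exact hxJx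
    rw [this]; ring
  -- Cauchy–Schwarz for u and y
  have hCS : (u ⬝ᵥ y) ^ 2 ≤ (u ⬝ᵥ u) * (y ⬝ᵥ y) := by
    have := Finset.sum_mul_sq_le_sq_mul_sq Finset.univ u y
    simpa [dotProduct, sq] using this
  have hxx : (0:ℝ) ≤ x ⬝ᵥ x := Finset.sum_nonneg fun i _ => mul_self_nonneg _
  have hyy : (0:ℝ) ≤ y ⬝ᵥ y := Finset.sum_nonneg fun i _ => mul_self_nonneg _
  have key : a ^ 2 + b ^ 2 ≤ (x ⬝ᵥ x) * (y ⬝ᵥ y) := by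
    rcases eq_or_lt_of_le (by positivity : (0:ℝ) ≤ a ^ 2 + b ^ 2) with h0 | h0
    · rw [← h0]; exact mul_nonneg hxx hyy
    · have h1 : (a ^ 2 + b ^ 2) ^ 2 ≤ (a ^ 2 + b ^ 2) * ((x ⬝ᵥ x) * (y ⬝ᵥ y)) := by
        rw [← mul_assoc, ← huu, ← huy]; exact hCS
      nlinarith [h0, h1]
  rw [hxy]
  nlinarith [key]
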